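/- Let p be a prime, R a commutative ring, M an R-module with pM = 0, T ⊆ R a multiplicative submonoid, and D: R → M an FW-derivation (where M is viewed as a T⁻¹R-module). Then the formula D'(a/t) = (t^p D(a) − a^p D(t))/t^{2p} gives a well-defined map D': T⁻¹R → M, and D' is the unique FW-derivation on T⁻¹R extending D. -/

import Mathlib

open scoped TensorProduct

/-- The polynomial `P(X,Y) = ((X+Y)^p - X^p - Y^p)/p` evaluated at `a, b`. -/
def fwP {R : Type*} [CommRing R] (p : ℕ) (a b : R) : R :=
  ∑ i ∈ Finset.Ioo 0 p, (Nat.choose p i / p : ℕ) • (a ^ i * b ^ (p - i))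

/-- A Frobenius–Witt derivation. -/
structure IsFWDerivation {R M : Type*} [CommRing R] [AddCommGroup M] [Module R M]
    (p : ℕ) (D : R → M) : Prop where
  map_add' : ∀ a b : R, D (a + b) = D a + D b - fwP p a b • D (p : R)
  map_mul' : ∀ a b : R, D (a * b) = b ^ p • D a + a ^ p • D b

/-- A logarithmic Frobenius–Witt derivation of the prelog ring `(R, Q, α)`. -/
structure IsLogFWDerivation {R M Q : Type*} [CommRing R] [AddCommGroup M] [Module R M]
    [CommMonoid Q] (p : ℕ) (α : Q →* R) (D : R → M) (δ : Q → M) : Prop where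
  toFW : IsFWDerivation p D
  map_one' : δ 1 = 0
  map_mul' : ∀ x y : Q, δ (x * y) = δ x + δ y
  compat : ∀ x : Q, D (α x) = α x ^ p • δ x

/-- The congruence on `Q` identifying elements differing by a unit;
its quotient is the sharpification `Q̄ = Q/Q^×`. -/
def sharpCon (Q : Type*) [CommMonoid Q] : Con Q where
  r x y := ∃ u : Qˣ, x = y * u
  iseqv := by
    refine ⟨fun x => ⟨1, by simp⟩, ?_, ?_⟩
    · rintro x y ⟨u, rfl⟩; exact ⟨u⁻¹, by simp⟩
    · rintro x y z ⟨u, rfl⟩ ⟨v, rfl⟩; exact ⟨v * u, by rw [Units.val_mul, mul_assoc]⟩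
  mul' := by
    rintro a b c d ⟨u, rfl⟩ ⟨v, rfl⟩
    exact ⟨u * v, by rw [Units.val_mul]; exact mul_mul_mul_comm b u d v⟩

/-- An ideal of a commutative monoid. -/
def IsMonIdeal {Q : Type*} [CommMonoid Q] (I : Set Q) : Prop :=
  ∀ a x : Q, x ∈ I → a * x ∈ I

/-- A prime ideal of a commutative monoid: an ideal whose complement is a submonoid. -/
def IsPrimeMonIdeal {Q : Type*} [CommMonoid Q] (I : Set Q) : Prop :=
  IsMonIdeal I ∧ (1 : Q) ∉ I ∧ ∀ x y : Q, x * y ∈ I → x ∈ I ∨ y ∈ I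

/-- The dimension of a commutative monoid: the Krull dimension of its poset of prime ideals. -/
noncomputable def monDim (Q : Type*) [CommMonoid Q] : WithBot (WithTop ℕ) :=
  Order.krullDim {I : Set Q // IsPrimeMonIdeal I}

/-- A commutative monoid is integral (cancellative). -/
def IsIntegralMon (Q : Type*) [CommMonoid Q] : Prop :=
  ∀ a b c : Q, a * b = a * c → b = c

/-- A commutative monoid is saturated: it is integral and whenever `x ∈ Q^{gp}` satisfies
`x^n ∈ Q` for some `n > 0`, then `x ∈ Q`; intrinsically, `a^n ∣ b^n → a ∣ b`. -/
def IsSaturatedMon (Q : Type*) [CommMonoid Q] : Prop :=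
  IsIntegralMon Q ∧ ∀ (a b : Q) (n : ℕ), 0 < n → a ^ n ∣ b ^ n → a ∣ b

/-- A commutative monoid is sharp if its only unit is `1`. -/
def IsSharpMon (Q : Type*) [CommMonoid Q] : Prop :=
  ∀ x : Q, IsUnit x → x = 1

/-- The ideal `I_α` of a prelog ring `(R, Q, α)`, generated by `α(Q⁺)`. -/
def prelogIdeal {R Q : Type*} [CommRing R] [CommMonoid Q] (α : Q →* R) : Ideal R :=
  Ideal.span (α '' {x : Q | ¬ IsUnit x})

/-- A Noetherian local ring is regular: its maximal ideal (= the ideal of nonunits) is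
generated by `dim R` elements. -/
def IsRegularLocal (S : Type*) [CommRing S] : Prop :=
  IsNoetherianRing S ∧ IsLocalRing S ∧
    ∃ (n : ℕ) (s : Fin n → S),
      Ideal.span (Set.range s) = Ideal.span {x : S | ¬ IsUnit x} ∧
      ringKrullDim S = (n : WithBot (WithTop ℕ))

/-- Log regularity of a local prelog ring `(R, Q, α)`. -/
def IsLogRegular {R Q : Type*} [CommRing R] [CommMonoid Q] (α : Q →* R) : Prop :=
  IsRegularLocal (R ⧸ prelogIdeal α) ∧
    ringKrullDim R = @HAdd.hAdd (WithBot ℕ∞) (WithBot ℕ∞) (WithBot ℕ∞) _ (ringKrullDim (R ⧸ prelogIdeal α)) (monDim Q)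


section FWAux

variable {p : ℕ} {R : Type*} [CommRing R] {T : Submonoid R}
  {M : Type*} [AddCommGroup M] [Module (Localization T) M] [Module R M]
  [IsScalarTower R (Localization T) M]

lemma fwP_key (hp : p.Prime) (a b : R) :
    (a + b) ^ p = a ^ p + b ^ p + (p : R) * fwP p a b := by
  have hmul : (p : R) * fwP p a b
      = ∑ i ∈ Finset.Ioo 0 p, a ^ i * b ^ (p - i) * (p.choose i : R) := by
    rw [fwP, Finset.mul_sum]
    refine Finset.sum_congr rfl fun i hi => ?_
    rw [Finset.mem_Ioo] at hi
    rw [nsmul_eq_mul, ← mul_assoc, ← Nat.cast_mul,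
      Nat.mul_div_cancel' (hp.dvd_choose_self (by omega) hi.2), mul_comm]
  have h1 : Finset.range (p + 1) = insert 0 (insert p (Finset.Ioo 0 p)) := by
    ext i
    simp only [Finset.mem_range, Finset.mem_insert, Finset.mem_Ioo]
    omega
  have h2 : (0 : ℕ) ∉ insert p (Finset.Ioo 0 p) := by
    simp only [Finset.mem_insert, Finset.mem_Ioo]
    have := hp.pos
    omega
  have h3 : p ∉ Finset.Ioo 0 p := by simp
  rw [add_pow, h1, Finset.sum_insert h2, Finset.sum_insert h3, hmul]
  simp only [pow_zero, Nat.sub_self, Nat.sub_zero, Nat.choose_self, Nat.choose_zero_right,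
    Nat.cast_one, one_mul, mul_one]
  ring

lemma fwP_mul_left (c a b : R) : fwP p (c * a) (c * b) = c ^ p * fwP p a b := by
  rw [fwP, fwP, Finset.mul_sum]
  refine Finset.sum_congr rfl fun i hi => ?_
  rw [Finset.mem_Ioo] at hi
  have hc : c ^ i * c ^ (p - i) = c ^ p := by
    rw [← pow_add]; congr 1; omega
  rw [mul_pow, mul_pow, mul_smul_comm]
  congr 1
  rw [mul_mul_mul_comm, hc]

lemma fwP_map {S : Type*} [CommRing S] (f : R →+* S) (a b : R) :
    fwP p (f a) (f b) = f (fwP p a b) := by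
  simp only [fwP, map_sum, map_nsmul, map_mul, map_pow]

lemma aux_alg_smul (r : R) (m : M) : algebraMap R (Localization T) r • m = r • m :=
  algebraMap_smul _ r m

lemma aux_comm (r : R) (x : Localization T) (m : M) : r • (x • m) = x • (r • m) := by
  rw [← aux_alg_smul (T := T) r (x • m), ← mul_smul, mul_comm, mul_smul, aux_alg_smul]

lemma aux_mk_smul (t : T) (m : M) : Localization.mk 1 t • ((t : R) • m) = m := by
  rw [← aux_alg_smul (T := T) (t : R) m, ← mul_smul, ← Localization.mk_one_eq_algebraMap,
    Localization.mk_mul, one_mul, mul_one, Localization.mk_self, one_smul]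

lemma aux_cancel (t : T) {m₁ m₂ : M} (h : (t : R) • m₁ = (t : R) • m₂) : m₁ = m₂ := by
  have := congrArg (fun m => Localization.mk 1 t • m) h
  simpa only [aux_mk_smul] using this

lemma aux_denom (d e : T) (m : M) :
    Localization.mk 1 (d * e) • ((e : R) • m) = Localization.mk 1 d • m := by
  rw [← aux_alg_smul (T := T) (e : R) m, ← mul_smul, ← Localization.mk_one_eq_algebraMap,
    Localization.mk_mul, one_mul, mul_one]
  congr 1
  rw [Localization.mk_eq_mk_iff, Localization.r_iff_exists]
  exact ⟨1, by simp [mul_comm]⟩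

lemma aux_num (e : R) (d : T) (m : M) :
    Localization.mk e d • m = e • (Localization.mk 1 d • m) := by
  rw [← aux_alg_smul (T := T) e, ← mul_smul]
  congr 1
  rw [← Localization.mk_one_eq_algebraMap, Localization.mk_mul, one_mul, mul_one]

lemma aux_mk_one_mul (d e : T) (m : M) :
    Localization.mk 1 d • (Localization.mk 1 e • m) = Localization.mk 1 (d * e) • m := by
  rw [← mul_smul, Localization.mk_mul, one_mul]

/-- The candidate formula for the extension of an FW-derivation to the localization. -/
def auxF (p : ℕ) (D : R → M) (a : R) (t : T) : M :=
  Localization.mk 1 (t ^ (2 * p)) • ((t : R) ^ p • D a - a ^ p • D (t : R))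

lemma aux_fwP_mk (A B : R) (d : T) :
    fwP p (Localization.mk A d) (Localization.mk B d)
      = Localization.mk (fwP p A B) (d ^ p) := by
  rw [fwP, fwP, Localization.mk_sum]
  refine Finset.sum_congr rfl fun i hi => ?_
  rw [Finset.mem_Ioo] at hi
  have hn : ((p.choose i / p : ℕ) : Localization T)
      = Localization.mk ((p.choose i / p : ℕ) : R) 1 := by
    rw [Localization.mk_one_eq_algebraMap, map_natCast]
  rw [nsmul_eq_mul, nsmul_eq_mul, hn, Localization.mk_pow, Localization.mk_pow,
    Localization.mk_mul, Localization.mk_mul, ← pow_add]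
  congr 1
  rw [one_mul]
  congr 1
  omega


lemma auxF_one (D : R → M) (hD : IsFWDerivation p D) (a : R) :
    auxF p D a (1 : T) = D a := by
  have hD1 : D 1 = 0 := by
    have h := hD.map_mul' 1 1
    rw [mul_one, one_pow, one_smul] at h
    exact left_eq_add.mp h
  rw [auxF, one_pow, Localization.mk_one, one_smul, OneMemClass.coe_one, hD1, one_pow,
    smul_zero, sub_zero, one_smul]

lemma auxF_scale (D : R → M) (hD : IsFWDerivation p D) (u t : T) (a : R) :
    auxF p D ((u : R) * a) (u * t) = auxF p D a t := by
  have hinner : ((u * t : T) : R) ^ p • D ((u : R) * a)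
        - ((u : R) * a) ^ p • D ((u * t : T) : R)
      = ((u ^ (2 * p) : T) : R) • ((t : R) ^ p • D a - a ^ p • D (t : R)) := by
    rw [Submonoid.coe_mul, hD.map_mul' (u : R) a, hD.map_mul' (u : R) (t : R)]
    simp only [SubmonoidClass.coe_pow, two_mul, pow_add, mul_pow, smul_sub, smul_add, smul_smul]
    module
  rw [auxF, auxF, hinner]
  have hd : (u * t) ^ (2 * p) = t ^ (2 * p) * u ^ (2 * p) := by rw [mul_pow, mul_comm]
  rw [hd, aux_denom]

lemma aux_wd (D : R → M) (hD : IsFWDerivation p D) {a b : R} {t s : T}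
    (h : Localization.r T (a, t) (b, s)) : auxF p D a t = auxF p D b s := by
  obtain ⟨c, hc⟩ := Localization.r_iff_exists.mp h
  have h1 : auxF p D a t = auxF p D (((c * s : T) : R) * a) ((c * s) * t) :=
    (auxF_scale D hD _ _ _).symm
  have h2 : auxF p D b s = auxF p D (((c * t : T) : R) * b) ((c * t) * s) :=
    (auxF_scale D hD _ _ _).symm
  have hnum : ((c * s : T) : R) * a = ((c * t : T) : R) * b := by
    push_cast
    rw [mul_assoc, mul_assoc]
    exact hc
  have hden : (c * s) * t = (c * t) * s := by
    rw [mul_assoc, mul_assoc, mul_comm s t]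
  rw [h1, h2, hnum, hden]

lemma auxD'_mul (D : R → M) (hD : IsFWDerivation p D) (a b : R) (t s : T) :
    auxF p D (a * b) (t * s)
      = (Localization.mk b s) ^ p • auxF p D a t
        + (Localization.mk a t) ^ p • auxF p D b s := by
  have hT1 : (t * s) ^ (2 * p) = (s ^ p * t ^ (2 * p)) * s ^ p := by
    refine Subtype.ext ?_
    push_cast
    ring
  have hT2 : (t * s) ^ (2 * p) = (t ^ p * s ^ (2 * p)) * t ^ p := by
    refine Subtype.ext ?_
    push_cast
    ring
  have e1 : (Localization.mk b s) ^ p • auxF p D a t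
      = Localization.mk 1 ((t * s) ^ (2 * p)) •
          (((s ^ p : T) : R) • (b ^ p • ((t : R) ^ p • D a - a ^ p • D (t : R)))) := by
    rw [auxF, Localization.mk_pow, aux_num, aux_mk_one_mul, aux_comm, hT1, aux_denom]
  have e2 : (Localization.mk a t) ^ p • auxF p D b s
      = Localization.mk 1 ((t * s) ^ (2 * p)) •
          (((t ^ p : T) : R) • (a ^ p • ((s : R) ^ p • D b - b ^ p • D (s : R)))) := by
    rw [auxF, Localization.mk_pow, aux_num, aux_mk_one_mul, aux_comm, hT2, aux_denom]
  rw [auxF, e1, e2, ← smul_add]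
  congr 1
  rw [Submonoid.coe_mul, hD.map_mul' a b, hD.map_mul' (t : R) (s : R)]
  simp only [SubmonoidClass.coe_pow, two_mul, pow_add, mul_pow, smul_sub, smul_add, smul_smul]
  module

lemma auxD'_add (hp : p.Prime) (hpM : ∀ m : M, p • m = 0) (D : R → M)
    (hD : IsFWDerivation p D) (a b : R) (t s : T) :
    auxF p D ((t : R) * b + (s : R) * a) (t * s)
      = auxF p D a t + auxF p D b s
        - fwP p (Localization.mk a t) (Localization.mk b s) • D ((p : ℕ) : R) := by
  have hps : ∀ (z : R) (m : M), (((p : ℕ) : R) * z) • m = 0 := by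
    intro z m
    rw [mul_smul, Nat.cast_smul_eq_nsmul]
    exact hpM _
  have hx : Localization.mk a t = Localization.mk ((s : R) * a) (t * s) := by
    rw [Localization.mk_eq_mk_iff, Localization.r_iff_exists]
    exact ⟨1, by push_cast; ring⟩
  have hy : Localization.mk b s = Localization.mk ((t : R) * b) (t * s) := by
    rw [Localization.mk_eq_mk_iff, Localization.r_iff_exists]
    exact ⟨1, by push_cast; ring⟩
  have hK1 : (t * s) ^ (2 * p) = t ^ (2 * p) * s ^ (2 * p) := by
    rw [mul_pow]
  have hK2 : (t * s) ^ (2 * p) = (t * s) ^ p * (t * s) ^ p := by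
    rw [two_mul, pow_add]
  have e1 : auxF p D a t
      = Localization.mk 1 ((t * s) ^ (2 * p)) •
          (((s ^ (2 * p) : T) : R) • ((t : R) ^ p • D a - a ^ p • D (t : R))) := by
    rw [auxF, hK1, aux_denom]
  have e2 : auxF p D b s
      = Localization.mk 1 ((t * s) ^ (2 * p)) •
          (((t ^ (2 * p) : T) : R) • ((s : R) ^ p • D b - b ^ p • D (s : R))) := by
    rw [auxF, hK1, mul_comm (t ^ (2 * p)), aux_denom]
  have e3 : fwP p (Localization.mk a t) (Localization.mk b s) • D ((p : ℕ) : R)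
      = Localization.mk 1 ((t * s) ^ (2 * p)) •
          (fwP p ((s : R) * a) ((t : R) * b) •
            ((((t * s) ^ p : T) : R) • D ((p : ℕ) : R))) := by
    rw [hx, hy, aux_fwP_mk, aux_num, ← aux_comm]
    congr 1
    rw [hK2, aux_denom]
  rw [auxF, e1, e2, e3, ← smul_add, ← smul_sub]
  congr 1
  have hN : (t : R) * b + (s : R) * a = (s : R) * a + (t : R) * b := add_comm _ _
  rw [hN, hD.map_add' ((s : R) * a) ((t : R) * b), fwP_key hp ((s : R) * a) ((t : R) * b),
    add_smul, add_smul, hps, add_zero, Submonoid.coe_mul,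
    hD.map_mul' (s : R) a, hD.map_mul' (t : R) b, hD.map_mul' (t : R) (s : R)]
  simp only [SubmonoidClass.coe_pow, Submonoid.coe_mul, two_mul, pow_add, mul_pow,
    smul_sub, smul_add, smul_smul, sub_smul, add_smul]
  module

end FWAux

/-- an FW-derivation into a `p`-torsion module extends uniquely to the
localization `T⁻¹R`, via `D'(a/t) = (t^p D(a) − a^p D(t))/t^{2p}`. -/
theorem stmt4 (p : ℕ) (hp : p.Prime) {R : Type*} [CommRing R] (T : Submonoid R)
    {M : Type*} [AddCommGroup M] [Module (Localization T) M] [Module R M]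
    [IsScalarTower R (Localization T) M]
    (hpM : ∀ m : M, p • m = 0)
    (D : R → M) (hD : IsFWDerivation p D) :
    ∃! D' : Localization T → M, IsFWDerivation p D' ∧
      (∀ a : R, D' (algebraMap R (Localization T) a) = D a) ∧
      ∀ (a : R) (t : T),
        D' (Localization.mk a t) =
          Localization.mk 1 ⟨(t : R) ^ (2 * p), pow_mem t.2 (2 * p)⟩ •
            ((t : R) ^ p • D a - a ^ p • D (t : R)) := by
  have hpow : ∀ t : T, (⟨(t : R) ^ (2 * p), pow_mem t.2 (2 * p)⟩ : T) = t ^ (2 * p) :=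
    fun t => Subtype.ext (by simp)
  have hp' : ((p : ℕ) : Localization T) = Localization.mk ((p : ℕ) : R) 1 := by
    rw [Localization.mk_one_eq_algebraMap, map_natCast]
  refine ⟨fun x => Localization.liftOn x (auxF p D)
      (fun {a c b d} h => aux_wd D hD h), ⟨⟨?_, ?_⟩, ?_, ?_⟩, ?_⟩
  · -- map_add'
    intro x y
    refine Localization.induction_on₂ x y ?_
    rintro ⟨a, t⟩ ⟨b, s⟩
    show Localization.liftOn (Localization.mk a t + Localization.mk b s) _ _ = _
    rw [Localization.add_mk, Localization.liftOn_mk, Localization.liftOn_mk,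
      Localization.liftOn_mk, hp', Localization.liftOn_mk, auxF_one D hD]
    exact auxD'_add hp hpM D hD a b t s
  · -- map_mul'
    intro x y
    refine Localization.induction_on₂ x y ?_
    rintro ⟨a, t⟩ ⟨b, s⟩
    show Localization.liftOn (Localization.mk a t * Localization.mk b s) _ _ = _
    rw [Localization.mk_mul, Localization.liftOn_mk, Localization.liftOn_mk,
      Localization.liftOn_mk]
    exact auxD'_mul D hD a b t s
  · -- extends D
    intro a
    show Localization.liftOn (algebraMap R (Localization T) a) _ _ = _
    rw [← Localization.mk_one_eq_algebraMap, Localization.liftOn_mk]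
    exact auxF_one D hD a
  · -- the formula
    intro a t
    show Localization.liftOn (Localization.mk a t) _ _ = _
    rw [Localization.liftOn_mk, hpow t]
    rfl
  · -- uniqueness
    rintro D'' ⟨_, _, h3⟩
    funext x
    refine Localization.induction_on x ?_
    rintro ⟨a, t⟩
    show D'' (Localization.mk a t) = Localization.liftOn (Localization.mk a t) _ _
    rw [h3 a t, Localization.liftOn_mk, hpow t]
    rfl
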